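/- Let F ⊆ C([n],k) be an intersecting family and let i, j ∈ [n] be distinct elements with 1 ≤ i < j ≤ n such that |{F ∈ F : i ∈ F}| ≥ |{F ∈ F : j ∈ F}|. Then γ(F) − γ(S_{i,j}(F)) ≤ C(n−3, k−2). -/

import Mathlib

/-- The `(i,j)`-shift of a set: replace `j` by `i` if `j ∈ A` and `i ∉ A`. -/
def shiftSet (i j : ℕ) (A : Finset ℕ) : Finset ℕ :=
  if i ∈ A ∨ j ∉ A then A else insert i (A.erase j)

/-- The `(i,j)`-shift of a family:
`S_{i,j}(F) = {S_{i,j}(A) : A ∈ F} ∪ {A ∈ F : S_{i,j}(A) ∈ F}`. -/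
def shiftFam (i j : ℕ) (F : Finset (Finset ℕ)) : Finset (Finset ℕ) :=
  F.image (shiftSet i j) ∪ F.filter (fun A => shiftSet i j A ∈ F)

/-- The maximal degree `Δ(F) = max_{i ∈ [n]} |{F ∈ F : i ∈ F}|`. -/
def maxDegree (n : ℕ) (F : Finset (Finset ℕ)) : ℕ :=
  (Finset.Icc 1 n).sup (fun i => (F.filter (fun A => i ∈ A)).card)

/-- The diversity `γ(F) = |F| - Δ(F)`. -/
def diversity (n : ℕ) (F : Finset (Finset ℕ)) : ℕ :=
  F.card - maxDegree n F

section Aux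
open Finset

lemma shiftSet_eq_compress {i j : ℕ} (hij : i ≠ j) (A : Finset ℕ) :
    shiftSet i j A = UV.compress {i} {j} A := by
  unfold shiftSet UV.compress
  by_cases h : i ∈ A ∨ j ∉ A
  · rw [if_pos h, if_neg]
    rintro ⟨h1, h2⟩
    rcases h with h | h
    · exact (Finset.disjoint_singleton_left.1 h1) h
    · exact h (Finset.singleton_subset_iff.1 h2)
  · push_neg at h
    rw [if_neg (by tauto), if_pos ⟨Finset.disjoint_singleton_left.2 h.1,
        Finset.singleton_subset_iff.2 h.2⟩]
    ext x
    simp only [Finset.mem_sdiff, Finset.mem_union, Finset.mem_singleton, Finset.mem_insert,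
      Finset.mem_erase, Finset.sup_eq_union]
    have := hij
    by_cases hx : x = i <;> by_cases hx' : x = j <;> simp_all

lemma shiftSet_idem (i j : ℕ) (A : Finset ℕ) :
    shiftSet i j (shiftSet i j A) = shiftSet i j A := by
  unfold shiftSet
  by_cases h : i ∈ A ∨ j ∉ A
  · rw [if_pos h, if_pos h]
  · rw [if_neg h, if_pos (Or.inl (Finset.mem_insert_self _ _))]

lemma shiftFam_eq_compression {i j : ℕ} (hij : i ≠ j) (F : Finset (Finset ℕ)) :
    shiftFam i j F = UV.compression {i} {j} F := by
  ext X
  rw [UV.mem_compression]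
  simp_rw [← shiftSet_eq_compress hij]
  constructor
  · intro hX
    rcases Finset.mem_union.1 hX with hX | hX
    · obtain ⟨A, hA, rfl⟩ := Finset.mem_image.1 hX
      by_cases h : shiftSet i j A ∈ F
      · exact Or.inl ⟨h, by rwa [shiftSet_idem]⟩
      · exact Or.inr ⟨h, A, hA, rfl⟩
    · obtain ⟨h1, h2⟩ := Finset.mem_filter.1 hX
      exact Or.inl ⟨h1, h2⟩
  · rintro (⟨h1, h2⟩ | ⟨h1, A, hA, rfl⟩)
    · exact Finset.mem_union_right _ (Finset.mem_filter.2 ⟨h1, h2⟩)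
    · exact Finset.mem_union_left _ (Finset.mem_image_of_mem _ hA)

lemma card_shiftFam {i j : ℕ} (hij : i ≠ j) (F : Finset (Finset ℕ)) :
    (shiftFam i j F).card = F.card := by
  rw [shiftFam_eq_compression hij, UV.card_compression]

section Chunk2
variable {i j : ℕ} {F : Finset (Finset ℕ)} {A X Y : Finset ℕ}

lemma shiftSet_of_shift (h1 : i ∉ A) (h2 : j ∈ A) :
    shiftSet i j A = insert i (A.erase j) := if_neg (by tauto)

lemma erase_shiftSet (hij : i ≠ j) (h1 : i ∉ A) (h2 : j ∈ A) :
    (shiftSet i j A).erase i = A.erase j := by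
  rw [shiftSet_of_shift h1 h2, Finset.erase_insert]
  exact fun h => h1 (Finset.mem_of_mem_erase h)

lemma unshift (hij : i ≠ j) (h1 : i ∉ A) (h2 : j ∈ A) :
    insert j ((shiftSet i j A).erase i) = A := by
  rw [erase_shiftSet hij h1 h2, Finset.insert_erase h2]

lemma mem_shiftSet_self (h1 : i ∉ A) (h2 : j ∈ A) : i ∈ shiftSet i j A := by
  rw [shiftSet_of_shift h1 h2]; exact Finset.mem_insert_self _ _

lemma not_mem_shiftSet (hij : i ≠ j) (h1 : i ∉ A) (h2 : j ∈ A) : j ∉ shiftSet i j A := by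
  rw [shiftSet_of_shift h1 h2]
  simp [hij.symm]

lemma shiftSet_ne (hij : i ≠ j) (h1 : i ∉ A) (h2 : j ∈ A) : shiftSet i j A ≠ A := by
  intro h
  exact h1 (h ▸ mem_shiftSet_self h1 h2)

lemma mem_shiftFam_iff :
    X ∈ shiftFam i j F ↔ (∃ A ∈ F, shiftSet i j A = X) ∨ (X ∈ F ∧ shiftSet i j X ∈ F) := by
  unfold shiftFam
  simp [Finset.mem_union, Finset.mem_image, Finset.mem_filter]

lemma mem_shiftFam_not_mem (hij : i ≠ j) (hX : X ∈ shiftFam i j F) (hXF : X ∉ F) :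
    i ∈ X ∧ j ∉ X ∧ insert j (X.erase i) ∈ F ∧ i ∉ insert j (X.erase i) ∧
      j ∈ insert j (X.erase i) ∧ shiftSet i j (insert j (X.erase i)) = X := by
  rcases mem_shiftFam_iff.1 hX with ⟨A, hA, hSA⟩ | ⟨h1, _⟩
  · by_cases h : i ∈ A ∨ j ∉ A
    · have hAA : shiftSet i j A = A := if_pos h
      rw [hAA] at hSA
      subst hSA
      exact absurd hA hXF
    · push_neg at h
      obtain ⟨h1, h2⟩ := h
      subst hSA
      have e1 : (shiftSet i j A).erase i = A.erase j := erase_shiftSet hij h1 h2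
      have e2 : insert j ((shiftSet i j A).erase i) = A := unshift hij h1 h2
      refine ⟨mem_shiftSet_self h1 h2, not_mem_shiftSet hij h1 h2, by rw [e2]; exact hA, ?_, ?_, ?_⟩
      · rw [e2]; exact h1
      · exact Finset.mem_insert_self _ _
      · rw [e2]
  · exact absurd h1 hXF

lemma f_injOn (hij : i ≠ j) :
    Set.InjOn (fun X => if X ∈ F then X else insert j (X.erase i)) (shiftFam i j F) := by
  intro X hX Y hY h
  simp only at h
  by_cases hXF : X ∈ F <;> by_cases hYF : Y ∈ F
  · rwa [if_pos hXF, if_pos hYF] at h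
  · rw [if_pos hXF, if_neg hYF] at h
    exfalso
    obtain ⟨hiY, hjY, hAF, hiA, hjA, hSA⟩ := mem_shiftFam_not_mem hij hY hYF
    -- X = insert j (Y.erase i) =: A, and shiftSet A = Y ∉ F, X ∈ F, X ∈ shiftFam
    rcases mem_shiftFam_iff.1 hX with ⟨B, hB, hSB⟩ | ⟨_, hSX⟩
    · by_cases hB' : i ∈ B ∨ j ∉ B
      · have hBB : shiftSet i j B = B := if_pos hB'
        rw [hBB] at hSB
        subst hSB
        rw [← h] at hSA
        rw [hBB] at hSA
        exact hYF (hSA ▸ hXF)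
      · push_neg at hB'
        have := mem_shiftSet_self hB'.1 hB'.2
        rw [hSB, h] at this
        exact hiA this
    · rw [h, hSA] at hSX
      exact hYF hSX
  · rw [if_neg hXF, if_pos hYF] at h
    exfalso
    obtain ⟨hiX, hjX, hAF, hiA, hjA, hSA⟩ := mem_shiftFam_not_mem hij hX hXF
    rcases mem_shiftFam_iff.1 hY with ⟨B, hB, hSB⟩ | ⟨_, hSY⟩
    · by_cases hB' : i ∈ B ∨ j ∉ B
      · have hBB : shiftSet i j B = B := if_pos hB'
        rw [hBB] at hSB
        subst hSB
        rw [h] at hSA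
        rw [hBB] at hSA
        exact hXF (hSA ▸ hYF)
      · push_neg at hB'
        have := mem_shiftSet_self hB'.1 hB'.2
        rw [hSB, ← h] at this
        exact hiA this
    · rw [← h, hSA] at hSY
      exact hXF hSY
  · rw [if_neg hXF, if_neg hYF] at h
    obtain ⟨_, _, _, _, _, hSA⟩ := mem_shiftFam_not_mem hij hX hXF
    obtain ⟨_, _, _, _, _, hSA'⟩ := mem_shiftFam_not_mem hij hY hYF
    rw [← hSA, ← hSA', h]

lemma deg_shiftFam_le (hij : i ≠ j) (l : ℕ) (hl : l ≠ i) :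
    ((shiftFam i j F).filter (fun X => l ∈ X)).card ≤ (F.filter (fun X => l ∈ X)).card := by
  apply Finset.card_le_card_of_injOn (fun X => if X ∈ F then X else insert j (X.erase i))
  · intro X hX
    obtain ⟨hXS, hlX⟩ := Finset.mem_filter.1 hX
    dsimp only
    by_cases hXF : X ∈ F
    · rw [if_pos hXF]; exact Finset.mem_filter.2 ⟨hXF, hlX⟩
    · rw [if_neg hXF]
      obtain ⟨_, _, hAF, _, _, _⟩ := mem_shiftFam_not_mem hij hXS hXF
      refine Finset.mem_filter.2 ⟨hAF, Finset.mem_insert.2 (Or.inr (Finset.mem_erase.2 ⟨hl, hlX⟩))⟩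
  · exact (f_injOn hij).mono (by intro x hx; exact Finset.mem_filter.1 hx |>.1)

lemma deg_shiftFam_i_le (hij : i ≠ j) :
    ((shiftFam i j F).filter (fun X => i ∈ X)).card ≤
      (F.filter (fun X => i ∈ X)).card +
        (F.filter (fun A => i ∉ A ∧ j ∈ A ∧ shiftSet i j A ∉ F)).card := by
  have h := Finset.card_le_card_of_injOn (fun X => if X ∈ F then X else insert j (X.erase i))
    (s := (shiftFam i j F).filter (fun X => i ∈ X))
    (t := F.filter (fun X => i ∈ X) ∪ F.filter (fun A => i ∉ A ∧ j ∈ A ∧ shiftSet i j A ∉ F))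
    ?_ ?_
  · exact h.trans (Finset.card_union_le _ _)
  · intro X hX
    obtain ⟨hXS, hiX⟩ := Finset.mem_filter.1 hX
    dsimp only
    by_cases hXF : X ∈ F
    · rw [if_pos hXF]; exact Finset.mem_union_left _ (Finset.mem_filter.2 ⟨hXF, hiX⟩)
    · rw [if_neg hXF]
      obtain ⟨_, _, hAF, hiA, hjA, hSA⟩ := mem_shiftFam_not_mem hij hXS hXF
      exact Finset.mem_union_right _
        (Finset.mem_filter.2 ⟨hAF, hiA, hjA, by rw [hSA]; exact hXF⟩)
  · exact (f_injOn hij).mono (by intro x hx; exact Finset.mem_filter.1 hx |>.1)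

end Chunk2

open Finset in
lemma cross_min_bound {m r : ℕ} (hr : 1 ≤ r) (hm : 2 * r ≤ m)
    {A B : Finset (Finset (Fin m))}
    (hA : (A : Set (Finset (Fin m))).Sized r) (hB : (B : Set (Finset (Fin m))).Sized r)
    (hcross : ∀ a ∈ A, ∀ b ∈ B, (a ∩ b).Nonempty)
    (hle : B.card ≤ A.card) : B.card ≤ (m - 1).choose (r - 1) := by
  by_cases hA' : A.card ≤ (m - 1).choose (r - 1)
  · exact hle.trans hA'
  push_neg at hA'
  have hrm : r ≤ m := le_trans (by omega) hm
  have h1m : 1 ≤ m := le_trans hr hrm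
  -- B is disjoint from the iterated shadow of the complements of A
  have hdisj : Disjoint B (Finset.shadow^[m - 2 * r] A.compls) := by
    rw [Finset.disjoint_right]
    intro X hX hXB
    simp only [Finset.mem_shadow_iterate_iff_exists_sdiff, mem_compls] at hX
    obtain ⟨C, hC, hXC, _⟩ := hX
    obtain ⟨x, hx⟩ := hcross _ hC _ hXB
    simp only [Finset.mem_inter] at hx
    exact (Finset.mem_compl.1 hx.1) (hXC hx.2)
  have z : (m - 1).choose (m - r) < A.compls.card := by
    rwa [Finset.card_compls, Nat.choose_symm_of_eq_add (tsub_add_tsub_cancel hrm hr).symm]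
  have hAbar : ((A.compls : Finset (Finset (Fin m))) : Set (Finset (Fin m))).Sized (m - r) := by
    simpa using hA.compls
  have hsub : m - 2 * r ≤ m - r := by omega
  have hres : m - r - (m - 2 * r) = r := by omega
  have kk := Finset.kruskal_katona_lovasz_form hsub
    (by omega : m - r ≤ m - 1) (by omega : m - 1 ≤ m) hAbar z.le
  rw [hres] at kk
  -- union bound
  have hun : (B ∪ Finset.shadow^[m - 2 * r] A.compls).card ≤ m.choose r := by
    have hsized : ((B ∪ Finset.shadow^[m - 2 * r] A.compls : Finset (Finset (Fin m))) :
        Set (Finset (Fin m))).Sized r := by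
      rw [Finset.coe_union, Set.sized_union]
      refine ⟨hB, ?_⟩
      have hsh := hAbar.shadow_iterate (k := m - 2 * r)
      rwa [hres] at hsh
    have := hsized.card_le
    simpa using this
  rw [Finset.card_union_of_disjoint hdisj] at hun
  have kk2 : (m - 1).choose r ≤ (Finset.shadow^[m - 2 * r] A.compls).card := by
    convert kk using 4
  have hc : A.compls.card = A.card := Finset.card_compls A
  have hchoose : m.choose r = (m - 1).choose (r - 1) + (m - 1).choose r := by
    have h1 : m = (m - 1) + 1 := by omega
    have h2 : r = (r - 1) + 1 := by omega
    rw [h1, h2, Nat.choose_succ_succ]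
    congr 1 <;> congr 1 <;> omega
  omega

open Finset in
lemma cross_min_bound_nat {m r : ℕ} (hr : 1 ≤ r) (hm : 2 * r ≤ m)
    (X : Finset ℕ) (hX : X.card = m)
    (A B : Finset (Finset ℕ))
    (hAX : ∀ a ∈ A, a ⊆ X) (hBX : ∀ b ∈ B, b ⊆ X)
    (hA : ∀ a ∈ A, a.card = r) (hB : ∀ b ∈ B, b.card = r)
    (hcross : ∀ a ∈ A, ∀ b ∈ B, (a ∩ b).Nonempty)
    (hle : B.card ≤ A.card) : B.card ≤ (m - 1).choose (r - 1) := by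
  classical
  -- the equivalence between X and Fin m
  let e : {x // x ∈ X} ≃ Fin m := X.equivFin.trans (finCongr hX)
  -- transfer a subset of X
  let G : Finset ℕ → Finset (Fin m) := fun s => (s.subtype (· ∈ X)).map e.toEmbedding
  have hGmem : ∀ (s : Finset ℕ) (y : Fin m), y ∈ G s ↔ ∃ x, ∃ hx : x ∈ X, x ∈ s ∧ e ⟨x, hx⟩ = y := by
    intro s y
    simp only [G, Finset.mem_map, Finset.mem_subtype, Equiv.coe_toEmbedding]
    constructor
    · rintro ⟨⟨x, hx⟩, hxs, rfl⟩
      exact ⟨x, hx, hxs, rfl⟩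
    · rintro ⟨x, hx, hxs, rfl⟩
      exact ⟨⟨x, hx⟩, hxs, rfl⟩
  have hGcard : ∀ s ⊆ X, (G s).card = s.card := by
    intro s hs
    rw [Finset.card_map, Finset.card_subtype, Finset.filter_true_of_mem (fun x hx => hs hx)]
  have hGinj : ∀ s ⊆ X, ∀ t ⊆ X, G s = G t → s = t := by
    intro s hs t ht h
    have h2 : s.subtype (· ∈ X) = t.subtype (· ∈ X) :=
      Finset.map_injective e.toEmbedding h
    have h3 := congrArg (Finset.map (Function.Embedding.subtype (· ∈ X))) h2
    rwa [Finset.subtype_map, Finset.subtype_map,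
      Finset.filter_true_of_mem (fun x hx => hs hx),
      Finset.filter_true_of_mem (fun x hx => ht hx)] at h3
  have key := cross_min_bound (A := A.image G) (B := B.image G) hr hm ?_ ?_ ?_ ?_
  · rwa [Finset.card_image_of_injOn
      (fun s hs t ht h => hGinj s (hBX s hs) t (hBX t ht) h)] at key
  · intro a ha
    simp only [Finset.coe_image, Set.mem_image, Finset.mem_coe] at ha
    obtain ⟨s, hs, rfl⟩ := ha
    rw [hGcard s (hAX s hs)]
    exact hA s hs
  · intro b hb
    simp only [Finset.coe_image, Set.mem_image, Finset.mem_coe] at hb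
    obtain ⟨s, hs, rfl⟩ := hb
    rw [hGcard s (hBX s hs)]
    exact hB s hs
  · intro a ha b hb
    obtain ⟨s, hs, rfl⟩ := Finset.mem_image.1 ha
    obtain ⟨t, ht, rfl⟩ := Finset.mem_image.1 hb
    obtain ⟨x, hx⟩ := hcross s hs t ht
    rw [Finset.mem_inter] at hx
    refine ⟨e ⟨x, hAX s hs hx.1⟩, ?_⟩
    rw [Finset.mem_inter, hGmem, hGmem]
    exact ⟨⟨x, hAX s hs hx.1, hx.1, rfl⟩, ⟨x, hAX s hs hx.1, hx.2, rfl⟩⟩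
  · rw [Finset.card_image_of_injOn (fun s hs t ht h => hGinj s (hAX s hs) t (hAX t ht) h),
      Finset.card_image_of_injOn (fun s hs t ht h => hGinj s (hBX s hs) t (hBX t ht) h)]
    exact hle

open Finset in
lemma D_card_bound (n k i j : ℕ) (F : Finset (Finset ℕ))
    (hF : F ⊆ (Finset.Icc 1 n).powersetCard k)
    (hint : ∀ A ∈ F, ∀ B ∈ F, (A ∩ B).Nonempty)
    (hi : 1 ≤ i) (hij : i < j) (hj : j ≤ n)
    (hdeg : (F.filter (fun A => j ∈ A)).card ≤ (F.filter (fun A => i ∈ A)).card) :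
    (F.filter (fun A => i ∉ A ∧ j ∈ A ∧ shiftSet i j A ∉ F)).card ≤ (n - 3).choose (k - 2) := by
  classical
  have hijne : i ≠ j := Nat.ne_of_lt hij
  set D := F.filter (fun A => i ∉ A ∧ j ∈ A ∧ shiftSet i j A ∉ F) with hD
  set Ai := F.filter (fun A => i ∈ A ∧ j ∉ A) with hAi
  have hmemF : ∀ A ∈ F, A ⊆ Finset.Icc 1 n ∧ A.card = k := by
    intro A hA
    exact Finset.mem_powersetCard.1 (hF hA)
  -- D.card ≤ Ai.card
  have hDAi : D.card ≤ Ai.card := by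
    have hDBj : D.card ≤ (F.filter (fun A => j ∈ A ∧ i ∉ A)).card := by
      apply Finset.card_le_card
      intro A hA
      rw [Finset.mem_filter] at hA ⊢
      tauto
    have e1 : ((F.filter (fun A => j ∈ A)).filter (fun A => i ∈ A)).card
        + ((F.filter (fun A => j ∈ A)).filter (fun A => i ∉ A)).card
        = (F.filter (fun A => j ∈ A)).card :=
      Finset.card_filter_add_card_filter_not _
    have e2 : ((F.filter (fun A => i ∈ A)).filter (fun A => j ∈ A)).card
        + ((F.filter (fun A => i ∈ A)).filter (fun A => j ∉ A)).card
        = (F.filter (fun A => i ∈ A)).card :=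
      Finset.card_filter_add_card_filter_not _
    have e3 : (F.filter (fun A => j ∈ A)).filter (fun A => i ∈ A)
        = (F.filter (fun A => i ∈ A)).filter (fun A => j ∈ A) := by
      rw [Finset.filter_filter, Finset.filter_filter]
      apply Finset.filter_congr
      intro x _
      tauto
    have e4 : (F.filter (fun A => j ∈ A)).filter (fun A => i ∉ A)
        = F.filter (fun A => j ∈ A ∧ i ∉ A) := Finset.filter_filter _ _ _
    have e5 : (F.filter (fun A => i ∈ A)).filter (fun A => j ∉ A) = Ai :=
      Finset.filter_filter _ _ _
    have e3' := congrArg Finset.card e3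
    have e4' := congrArg Finset.card e4
    have e5' := congrArg Finset.card e5
    omega
  by_cases hk : k ≤ 1
  -- degenerate: k ≤ 1
  · have hD1 : D.card ≤ 1 := by
      rw [Finset.card_le_one]
      have hsingle : ∀ A ∈ D, A = {j} := by
        intro A hA
        rw [hD, Finset.mem_filter] at hA
        obtain ⟨hAF, _, hjA, _⟩ := hA
        obtain ⟨_, hcard⟩ := hmemF A hAF
        have h1 : 1 ≤ A.card := Finset.card_pos.2 ⟨j, hjA⟩
        have : A.card = 1 := by omega
        obtain ⟨x, hx⟩ := Finset.card_eq_one.1 this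
        rw [hx] at hjA ⊢
        rw [Finset.mem_singleton.1 hjA]
      intro a ha b hb
      rw [hsingle a ha, hsingle b hb]
    have : (n - 3).choose (k - 2) = 1 := by
      have : k - 2 = 0 := by omega
      rw [this, Nat.choose_zero_right]
    omega
  push_neg at hk
  by_cases hn2 : n ≤ 2
  -- degenerate: n ≤ 2, k ≥ 2: D is empty
  · have : D = ∅ := by
      apply Finset.eq_empty_of_forall_notMem
      intro A hA
      rw [hD, Finset.mem_filter] at hA
      obtain ⟨hAF, hiA, hjA, _⟩ := hA
      obtain ⟨hsub, hcard⟩ := hmemF A hAF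
      have : A ⊆ (Finset.Icc 1 n).erase i := by
        intro x hx
        exact Finset.mem_erase.2 ⟨fun h => hiA (h ▸ hx), hsub hx⟩
      have h2 := Finset.card_le_card this
      rw [Finset.card_erase_of_mem (by simp; omega), Nat.card_Icc] at h2
      omega
    rw [this]
    simp
  push_neg at hn2
  -- the ground set X = [n] \ {i,j}
  set X := (Finset.Icc 1 n) \ {i, j} with hX
  have hijsub : ({i, j} : Finset ℕ) ⊆ Finset.Icc 1 n := by
    intro x hx
    rcases Finset.mem_insert.1 hx with rfl | hx
    · simp; omega
    · rw [Finset.mem_singleton.1 hx]; simp; omega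
  have hXcard : X.card = n - 2 := by
    rw [hX, Finset.card_sdiff_of_subset hijsub, Nat.card_Icc]
    rw [Finset.card_insert_of_notMem (by simp [hijne]), Finset.card_singleton]
    omega
  have hmemX : ∀ x, x ∈ Finset.Icc 1 n → x ≠ i → x ≠ j → x ∈ X := by
    intro x h1 h2 h3
    rw [hX, Finset.mem_sdiff]
    exact ⟨h1, by simp [h2, h3]⟩
  -- facts about members of D and Ai
  have hDfact : ∀ A ∈ D, A ∈ F ∧ i ∉ A ∧ j ∈ A ∧ shiftSet i j A ∉ F ∧ A.erase j ⊆ X ∧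
      (A.erase j).card = k - 1 := by
    intro A hA
    rw [hD, Finset.mem_filter] at hA
    obtain ⟨hAF, hiA, hjA, hSA⟩ := hA
    obtain ⟨hsub, hcard⟩ := hmemF A hAF
    refine ⟨hAF, hiA, hjA, hSA, ?_, ?_⟩
    · intro x hx
      obtain ⟨hxj, hxA⟩ := Finset.mem_erase.1 hx
      exact hmemX x (hsub hxA) (fun h => hiA (h ▸ hxA)) hxj
    · rw [Finset.card_erase_of_mem hjA, hcard]
  have hAifact : ∀ C ∈ Ai, C ∈ F ∧ i ∈ C ∧ j ∉ C ∧ C.erase i ⊆ X ∧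
      (C.erase i).card = k - 1 := by
    intro C hC
    rw [hAi, Finset.mem_filter] at hC
    obtain ⟨hCF, hiC, hjC⟩ := hC
    obtain ⟨hsub, hcard⟩ := hmemF C hCF
    refine ⟨hCF, hiC, hjC, ?_, ?_⟩
    · intro x hx
      obtain ⟨hxi, hxC⟩ := Finset.mem_erase.1 hx
      exact hmemX x (hsub hxC) hxi (fun h => hjC (h ▸ hxC))
    · rw [Finset.card_erase_of_mem hiC, hcard]
  by_cases hnk : 2 * k ≤ n
  -- main case: use the cross-intersecting bound
  · have key := cross_min_bound_nat (m := n - 2) (r := k - 1) (by omega) (by omega)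
      X hXcard (Ai.image (fun C => C.erase i)) (D.image (fun A => A.erase j))
      ?_ ?_ ?_ ?_ ?_ ?_
    · have himg : (D.image (fun A => A.erase j)).card = D.card := by
        apply Finset.card_image_of_injOn
        intro A hA A' hA' h
        obtain ⟨_, _, hjA, _, _, _⟩ := hDfact A hA
        obtain ⟨_, _, hjA', _, _, _⟩ := hDfact A' hA'
        dsimp only at h
        rw [← Finset.insert_erase hjA, ← Finset.insert_erase hjA', h]
      rw [himg] at key
      calc D.card ≤ (n - 2 - 1).choose (k - 1 - 1) := key
        _ = (n - 3).choose (k - 2) := by congr 1 <;> omega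
    · intro a ha
      obtain ⟨C, hC, rfl⟩ := Finset.mem_image.1 ha
      exact (hAifact C hC).2.2.2.1
    · intro b hb
      obtain ⟨A, hA, rfl⟩ := Finset.mem_image.1 hb
      exact (hDfact A hA).2.2.2.2.1
    · intro a ha
      obtain ⟨C, hC, rfl⟩ := Finset.mem_image.1 ha
      exact (hAifact C hC).2.2.2.2
    · intro b hb
      obtain ⟨A, hA, rfl⟩ := Finset.mem_image.1 hb
      exact (hDfact A hA).2.2.2.2.2
    · intro a ha b hb
      obtain ⟨C, hC, rfl⟩ := Finset.mem_image.1 ha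
      obtain ⟨A, hA, rfl⟩ := Finset.mem_image.1 hb
      obtain ⟨hCF, hiC, hjC, _, _⟩ := hAifact C hC
      obtain ⟨hAF, hiA, hjA, _, _, _⟩ := hDfact A hA
      obtain ⟨x, hx⟩ := hint C hCF A hAF
      rw [Finset.mem_inter] at hx
      refine ⟨x, Finset.mem_inter.2 ⟨?_, ?_⟩⟩
      · exact Finset.mem_erase.2 ⟨fun h => hiA (h ▸ hx.2), hx.1⟩
      · exact Finset.mem_erase.2 ⟨fun h => hjC (h ▸ hx.1), hx.2⟩
    · have himgD : (D.image (fun A => A.erase j)).card = D.card := by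
        apply Finset.card_image_of_injOn
        intro A hA A' hA' h
        obtain ⟨_, _, hjA, _, _, _⟩ := hDfact A hA
        obtain ⟨_, _, hjA', _, _, _⟩ := hDfact A' hA'
        dsimp only at h
        rw [← Finset.insert_erase hjA, ← Finset.insert_erase hjA', h]
      have himgAi : (Ai.image (fun C => C.erase i)).card = Ai.card := by
        apply Finset.card_image_of_injOn
        intro C hC C' hC' h
        obtain ⟨_, hiC, _, _, _⟩ := hAifact C hC
        obtain ⟨_, hiC', _, _, _⟩ := hAifact C' hC'
        dsimp only at h
        rw [← Finset.insert_erase hiC, ← Finset.insert_erase hiC', h]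
      rw [himgD, himgAi]
      exact hDAi
  -- small case: n < 2k, counting argument
  · push_neg at hnk
    -- the injection into (k-1)-subsets of X
    set G := D.image (shiftSet i j) ∪ Ai with hG
    have himgD : (D.image (shiftSet i j)).card = D.card := by
      apply Finset.card_image_of_injOn
      intro A hA A' hA' h
      obtain ⟨_, hiA, hjA, _, _, _⟩ := hDfact A hA
      obtain ⟨_, hiA', hjA', _, _, _⟩ := hDfact A' hA'
      rw [← unshift hijne hiA hjA, ← unshift hijne hiA' hjA', h]
    have hGcard : G.card = D.card + Ai.card := by
      rw [hG, Finset.card_union_of_disjoint, himgD]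
      rw [Finset.disjoint_left]
      intro C hC hC'
      obtain ⟨A, hA, rfl⟩ := Finset.mem_image.1 hC
      obtain ⟨_, _, _, hSA, _, _⟩ := hDfact A hA
      exact hSA (hAifact _ hC').1
    have hGle : G.card ≤ (X.powersetCard (k - 1)).card := by
      apply Finset.card_le_card_of_injOn (fun C => C.erase i)
      · intro C hC
        rw [hG, Finset.mem_coe, Finset.mem_union] at hC
        simp only [Finset.mem_coe, Finset.mem_powersetCard]
        rcases hC with hC | hC
        · obtain ⟨A, hA, rfl⟩ := Finset.mem_image.1 hC
          obtain ⟨_, hiA, hjA, _, hsub, hcard⟩ := hDfact A hA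
          rw [erase_shiftSet hijne hiA hjA]
          exact ⟨hsub, hcard⟩
        · obtain ⟨_, _, _, hsub, hcard⟩ := hAifact C hC
          exact ⟨hsub, hcard⟩
      · intro C hC C' hC' h
        have hiC : i ∈ C := by
          rw [Finset.mem_coe, hG, Finset.mem_union] at hC
          rcases hC with hC | hC
          · obtain ⟨A, hA, rfl⟩ := Finset.mem_image.1 hC
            obtain ⟨_, hiA, hjA, _, _, _⟩ := hDfact A hA
            exact mem_shiftSet_self hiA hjA
          · exact (hAifact C hC).2.1
        have hiC' : i ∈ C' := by
          rw [Finset.mem_coe, hG, Finset.mem_union] at hC'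
          rcases hC' with hC' | hC'
          · obtain ⟨A, hA, rfl⟩ := Finset.mem_image.1 hC'
            obtain ⟨_, hiA, hjA, _, _, _⟩ := hDfact A hA
            exact mem_shiftSet_self hiA hjA
          · exact (hAifact C' hC').2.1
        dsimp only at h
        rw [← Finset.insert_erase hiC, ← Finset.insert_erase hiC', h]
    rw [Finset.card_powersetCard, hXcard] at hGle
    -- choose inequality
    have hsplit : (n - 2).choose (k - 1) = (n - 3).choose (k - 2) + (n - 3).choose (k - 1) := by
      have h1 : n - 2 = (n - 3) + 1 := by omega
      have h2 : k - 1 = (k - 2) + 1 := by omega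
      rw [h1, h2, Nat.choose_succ_succ]
    have hmono : (n - 3).choose (k - 1) ≤ (n - 3).choose (k - 2) := by
      have e := Nat.choose_succ_right_eq (n - 3) (k - 2)
      have hk1 : k - 2 + 1 = k - 1 := by omega
      rw [hk1] at e
      have hle2 : (n - 3).choose (k - 1) * (k - 1) ≤ (n - 3).choose (k - 2) * (k - 1) := by
        rw [e]
        exact Nat.mul_le_mul_left _ (by omega)
      exact Nat.le_of_mul_le_mul_right hle2 (by omega)
    omega

end Aux

/-- Lemma 2: if `F ⊆ C([n],k)` is intersecting, `1 ≤ i < j ≤ n`, and the degree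
of `i` in `F` is at least that of `j`, then
`γ(F) - γ(S_{i,j}(F)) ≤ C(n-3, k-2)`. -/
theorem diversity_shift_loss (n k i j : ℕ)
    (F : Finset (Finset ℕ))
    (hF : F ⊆ (Finset.Icc 1 n).powersetCard k)
    (hint : ∀ A ∈ F, ∀ B ∈ F, (A ∩ B).Nonempty)
    (hi : 1 ≤ i) (hij : i < j) (hj : j ≤ n)
    (hdeg : (F.filter (fun A => j ∈ A)).card ≤ (F.filter (fun A => i ∈ A)).card) :
    diversity n F - diversity n (shiftFam i j F) ≤ (n - 3).choose (k - 2) := by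
  classical
  have hijne : i ≠ j := Nat.ne_of_lt hij
  have hcard : (shiftFam i j F).card = F.card := card_shiftFam hijne F
  have hd := D_card_bound n k i j F hF hint hi hij hj hdeg
  have hiIcc : i ∈ Finset.Icc 1 n := by simp; omega
  have hΔS_le_card : maxDegree n (shiftFam i j F) ≤ (shiftFam i j F).card := by
    unfold maxDegree
    exact Finset.sup_le (fun l _ => Finset.card_filter_le _ _)
  have hΔS : maxDegree n (shiftFam i j F) ≤ maxDegree n F + (n - 3).choose (k - 2) := by
    unfold maxDegree
    apply Finset.sup_le
    intro l hl
    by_cases hli : l = i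
    · subst hli
      exact (deg_shiftFam_i_le hijne).trans (Nat.add_le_add
        (Finset.le_sup (f := fun t => (F.filter (fun A => t ∈ A)).card) hiIcc) hd)
    · exact (deg_shiftFam_le hijne l hli).trans
        ((Finset.le_sup (f := fun t => (F.filter (fun A => t ∈ A)).card) hl).trans
          (Nat.le_add_right _ _))
  unfold diversity
  omega
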